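/- Let F = F_1 · F_2 ≠ 0 where F_1 ∈ ℂ[x_1,...,x_m] and F_2 ∈ ℂ[y_1,...,y_n] are homogeneous. If 𝕏 ⊂ ℙ^{m+n−1} is a finite set of points with I(𝕏) ⊆ F^⊥, and 𝕐_1 is the projection of 𝕏 from V(X_1,...,X_m) onto V(Y_1,...,Y_n), then I(𝕐_1) ⊆ F_1^⊥ (the annihilator of F_1 computed in ℂ[X_1,...,X_m], extended by the variables Y_j), i.e., 𝕐_1 is apolar to F_1. -/
import Mathlib


open MvPolynomial
open scoped Classical

/-- Differentiation of `F` by the monomial with exponent vector `m`: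
`∂^m F`, defined coefficientwise via descending factorials. -/
noncomputable def contract {σ : Type*} (m : σ →₀ ℕ) (F : MvPolynomial σ ℂ) : MvPolynomial σ ℂ :=
  ∑ k ∈ F.support, monomial (k - m) (F.coeff k * m.prod fun i e => (Nat.descFactorial (k i) e : ℂ))

/-- The apolarity (differentiation) action: `apolar g F = g ∘ F`. -/
noncomputable def apolar {σ : Type*} (g F : MvPolynomial σ ℂ) : MvPolynomial σ ℂ :=
  ∑ m ∈ g.support, g.coeff m • contract m F

/-- Vanishing ideal of a set of (representative vectors of) projective points:
all polynomials vanishing on the corresponding lines through the origin. -/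
noncomputable def vIdeal {σ : Type*} (S : Set (σ → ℂ)) : Ideal (MvPolynomial σ ℂ) :=
  ⨅ v ∈ S, ⨅ c : ℂ, RingHom.ker (MvPolynomial.eval (c • v))

lemma contract_eq_sum {σ : Type*} (m : σ →₀ ℕ) (F : MvPolynomial σ ℂ) {s : Finset (σ →₀ ℕ)}
    (hs : F.support ⊆ s) :
    contract m F
      = ∑ k ∈ s, monomial (k - m) (F.coeff k * m.prod fun i e => (Nat.descFactorial (k i) e : ℂ)) := by
  refine Finset.sum_subset hs fun k _ hk => ?_
  rw [MvPolynomial.notMem_support_iff.mp hk, zero_mul, map_zero]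

lemma apolar_eq_sum {σ : Type*} (g F : MvPolynomial σ ℂ) {s : Finset (σ →₀ ℕ)}
    (hs : g.support ⊆ s) :
    apolar g F = ∑ m ∈ s, g.coeff m • contract m F := by
  refine Finset.sum_subset hs fun k _ hk => ?_
  rw [MvPolynomial.notMem_support_iff.mp hk, zero_smul]

lemma contract_monomial {σ : Type*} (m k : σ →₀ ℕ) (c : ℂ) :
    contract m (monomial k c)
      = monomial (k - m) (c * m.prod fun i e => (Nat.descFactorial (k i) e : ℂ)) := by
  by_cases hc : c = 0
  · simp [hc, contract]
  · unfold contract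
    rw [support_monomial, if_neg hc, Finset.sum_singleton, coeff_monomial, if_pos rfl]

lemma contract_add {σ : Type*} (m : σ →₀ ℕ) (F G : MvPolynomial σ ℂ) :
    contract m (F + G) = contract m F + contract m G := by
  have h1 : F.support ⊆ F.support ∪ G.support := Finset.subset_union_left
  have h2 : G.support ⊆ F.support ∪ G.support := Finset.subset_union_right
  have h3 : (F + G).support ⊆ F.support ∪ G.support := support_add
  rw [contract_eq_sum m F h1, contract_eq_sum m G h2, contract_eq_sum m (F + G) h3,
    ← Finset.sum_add_distrib]
  refine Finset.sum_congr rfl fun k _ => ?_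
  rw [coeff_add, add_mul, map_add]

noncomputable def contractHom {σ : Type*} (m : σ →₀ ℕ) :
    MvPolynomial σ ℂ →+ MvPolynomial σ ℂ :=
  AddMonoidHom.mk' (contract m) (contract_add m)

lemma rename_inl_support {α β : Type*} (F : MvPolynomial α ℂ) {k : (α ⊕ β) →₀ ℕ}
    (hk : k ∈ (rename (Sum.inl : α → α ⊕ β) F).support) (b : β) : k (Sum.inr b) = 0 := by
  obtain ⟨u, hu, -⟩ := coeff_rename_ne_zero _ _ _ (MvPolynomial.mem_support_iff.mp hk)
  rw [← hu]
  exact Finsupp.mapDomain_notin_range u _ (by simp)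

lemma rename_inr_support {α β : Type*} (F : MvPolynomial β ℂ) {k : (α ⊕ β) →₀ ℕ}
    (hk : k ∈ (rename (Sum.inr : β → α ⊕ β) F).support) (a : α) : k (Sum.inl a) = 0 := by
  obtain ⟨u, hu, -⟩ := coeff_rename_ne_zero _ _ _ (MvPolynomial.mem_support_iff.mp hk)
  rw [← hu]
  exact Finsupp.mapDomain_notin_range u _ (by simp)

lemma contract_rename_inl_eq_zero {α β : Type*} (F : MvPolynomial α ℂ)
    {k : (α ⊕ β) →₀ ℕ} {b : β} (hb : k (Sum.inr b) ≠ 0) :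
    contract k (rename (Sum.inl : α → α ⊕ β) F) = 0 := by
  unfold contract
  refine Finset.sum_eq_zero fun p hp => ?_
  have hprod : (k.prod fun i e => (Nat.descFactorial (p i) e : ℂ)) = 0 := by
    refine Finset.prod_eq_zero (Finsupp.mem_support_iff.mpr hb) ?_
    obtain ⟨e, he⟩ := Nat.exists_eq_succ_of_ne_zero hb
    simp [rename_inl_support F hp b, he]
  rw [hprod, mul_zero, map_zero]

lemma contract_mul {α β : Type*} (F₁ : MvPolynomial α ℂ) (F₂ : MvPolynomial β ℂ)
    (k : (α ⊕ β) →₀ ℕ) (hk : ∀ b, k (Sum.inr b) = 0) :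
    contract k (rename (Sum.inl : α → α ⊕ β) F₁ * rename Sum.inr F₂)
      = contract k (rename Sum.inl F₁) * rename Sum.inr F₂ := by
  set A := rename (Sum.inl : α → α ⊕ β) F₁ with hA
  set B := rename (Sum.inr : β → α ⊕ β) F₂ with hB
  conv_lhs => rw [show A = ∑ p ∈ A.support, monomial p (coeff p A) from as_sum A,
    show B = ∑ q ∈ B.support, monomial q (coeff q B) from as_sum B]
  conv_rhs => rw [show A = ∑ p ∈ A.support, monomial p (coeff p A) from as_sum A,
    show B = ∑ q ∈ B.support, monomial q (coeff q B) from as_sum B]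
  rw [Finset.sum_mul_sum, show contract k = ⇑(contractHom k) from rfl]
  simp only [map_sum, Finset.sum_mul, Finset.mul_sum]
  rw [Finset.sum_comm]
  refine Finset.sum_congr rfl fun q hq => Finset.sum_congr rfl fun p hp => ?_
  show contract k _ = contract k _ * _
  rw [monomial_mul, contract_monomial, contract_monomial, monomial_mul]
  have hsupp : (p + q) - k = (p - k) + q := by
    refine Finsupp.ext fun i => ?_
    rcases i with a | b
    · have : q (Sum.inl a) = 0 := rename_inr_support F₂ hq a
      simp only [Finsupp.tsub_apply, Finsupp.add_apply, this]
      omega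
    · have h1 : k (Sum.inr b) = 0 := hk b
      simp only [Finsupp.tsub_apply, Finsupp.add_apply, h1]
      omega
  rw [hsupp]
  have hprod : (k.prod fun i e => (Nat.descFactorial ((p + q) i) e : ℂ))
      = k.prod fun i e => (Nat.descFactorial (p i) e : ℂ) := by
    refine Finset.prod_congr rfl fun i hi => ?_
    rcases i with a | b
    · have : q (Sum.inl a) = 0 := rename_inr_support F₂ hq a
      simp [this]
    · exact absurd (hk b) (Finsupp.mem_support_iff.mp hi)
  rw [hprod]
  ring_nf

/-- Substitute `Y`-variables by `0`. -/
noncomputable def projA (α β : Type*) :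
    MvPolynomial (α ⊕ β) ℂ →ₐ[ℂ] MvPolynomial (α ⊕ β) ℂ :=
  aeval (Sum.elim (fun a => X (Sum.inl a)) fun _ => 0)

lemma projA_monomial {α β : Type*} (p : (α ⊕ β) →₀ ℕ) (c : ℂ) :
    projA α β (monomial p c)
      = if ∀ b, p (Sum.inr b) = 0 then monomial p c else 0 := by
  rw [projA, aeval_monomial]
  split_ifs with hP
  · have : (p.prod fun i e =>
          (Sum.elim (fun a => X (Sum.inl a)) (fun _ => (0 : MvPolynomial (α ⊕ β) ℂ)) i) ^ e)
        = p.prod fun i e => (X i : MvPolynomial (α ⊕ β) ℂ) ^ e := by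
      refine Finset.prod_congr rfl fun i hi => ?_
      rcases i with a | b
      · simp
      · exact absurd (hP b) (Finsupp.mem_support_iff.mp hi)
    rw [this, monomial_eq]
    rfl
  · push_neg at hP
    obtain ⟨b, hb⟩ := hP
    have : (p.prod fun i e =>
          (Sum.elim (fun a => X (Sum.inl a)) (fun _ => (0 : MvPolynomial (α ⊕ β) ℂ)) i) ^ e) = 0 := by
      refine Finset.prod_eq_zero (Finsupp.mem_support_iff.mpr hb) ?_
      simp [zero_pow hb]
    rw [this, mul_zero]

lemma coeff_projA {α β : Type*} (g : MvPolynomial (α ⊕ β) ℂ) (k : (α ⊕ β) →₀ ℕ) :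
    coeff k (projA α β g) = if ∀ b, k (Sum.inr b) = 0 then coeff k g else 0 := by
  conv_lhs => rw [show g = ∑ p ∈ g.support, monomial p (coeff p g) from as_sum g]
  rw [map_sum, coeff_sum]
  have hterm : ∀ p ∈ g.support, coeff k (projA α β (monomial p (coeff p g)))
      = if (∀ b, p (Sum.inr b) = 0) ∧ p = k then coeff p g else 0 := by
    intro p _
    rw [projA_monomial]
    by_cases h1 : ∀ b, p (Sum.inr b) = 0
    · rw [if_pos h1, coeff_monomial]
      by_cases h2 : p = k
      · rw [if_pos h2, if_pos ⟨h1, h2⟩]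
      · rw [if_neg h2, if_neg fun h => h2 h.2]
    · rw [if_neg h1, if_neg fun h => h1 h.1, coeff_zero]
  rw [Finset.sum_congr rfl hterm]
  split_ifs with hP
  · rw [Finset.sum_eq_single k (fun p _ hpk => if_neg fun h => hpk h.2)
      (fun hk => by simp [MvPolynomial.notMem_support_iff.mp hk])]
    rw [if_pos ⟨hP, rfl⟩]
  · refine Finset.sum_eq_zero fun p _ => ?_
    rw [if_neg]
    rintro ⟨h1, rfl⟩
    exact hP h1

lemma apolar_projA {α β : Type*} (g : MvPolynomial (α ⊕ β) ℂ) (F₁ : MvPolynomial α ℂ) :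
    apolar (projA α β g) (rename Sum.inl F₁) = apolar g (rename Sum.inl F₁) := by
  have h1 : (projA α β g).support ⊆ g.support ∪ (projA α β g).support :=
    Finset.subset_union_right
  have h2 : g.support ⊆ g.support ∪ (projA α β g).support := Finset.subset_union_left
  rw [apolar_eq_sum _ _ h1, apolar_eq_sum _ _ h2]
  refine Finset.sum_congr rfl fun k _ => ?_
  by_cases hP : ∀ b, k (Sum.inr b) = 0
  · rw [coeff_projA, if_pos hP]
  · push_neg at hP
    obtain ⟨b, hb⟩ := hP
    rw [contract_rename_inl_eq_zero F₁ hb, smul_zero, smul_zero]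

lemma mem_vIdeal {σ : Type*} {S : Set (σ → ℂ)} {q : MvPolynomial σ ℂ} :
    q ∈ vIdeal S ↔ ∀ v ∈ S, ∀ c : ℂ, eval (c • v) q = 0 := by
  simp [vIdeal, Ideal.mem_iInf, RingHom.mem_ker]

lemma eval_projA {α β : Type*} (w : (α ⊕ β) → ℂ) (g : MvPolynomial (α ⊕ β) ℂ) :
    eval w (projA α β g)
      = eval (Sum.elim (fun a => w (Sum.inl a)) fun _ => (0 : ℂ)) g := by
  rw [projA, aeval_def, MvPolynomial.algebraMap_eq, ← eval_assoc]
  refine congrFun (congrArg (fun z => ⇑(eval z)) (funext fun i => ?_)) g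
  rcases i with a | b <;> simp

/-- If `F = F₁·F₂ ≠ 0` with `F₁ ∈ ℂ[x_1,…,x_m]`, `F₂ ∈ ℂ[y_1,…,y_n]` homogeneous, `𝕏` is a
finite set of points apolar to `F`, and `𝕐₁` is the projection of `𝕏` from `V(X_1,…,X_m)`
onto `V(Y_1,…,Y_n)` (keeping the `x`-coordinates), then `𝕐₁` is apolar to `F₁`. -/
theorem statement7 (m n : ℕ) (F₁ : MvPolynomial (Fin m) ℂ) (F₂ : MvPolynomial (Fin n) ℂ)
    (d₁ d₂ : ℕ) (h₁ : F₁.IsHomogeneous d₁) (h₂ : F₂.IsHomogeneous d₂)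
    (hF : (rename Sum.inl F₁ * rename Sum.inr F₂ : MvPolynomial (Fin m ⊕ Fin n) ℂ) ≠ 0)
    (𝕏 : Finset ((Fin m ⊕ Fin n) → ℂ)) (h0 : ∀ v ∈ 𝕏, v ≠ 0)
    (hap : ∀ g ∈ vIdeal (↑𝕏 : Set ((Fin m ⊕ Fin n) → ℂ)),
      apolar g (rename Sum.inl F₁ * rename Sum.inr F₂) = 0) :
    ∀ g ∈ vIdeal ↑(𝕏.image fun v =>
        Sum.elim (fun i : Fin m => v (Sum.inl i)) fun _ : Fin n => (0 : ℂ)),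
      apolar g (rename Sum.inl F₁ : MvPolynomial (Fin m ⊕ Fin n) ℂ) = 0 := by
  intro g hg
  have hB : (rename Sum.inr F₂ : MvPolynomial (Fin m ⊕ Fin n) ℂ) ≠ 0 := by
    intro h
    exact hF (by rw [h, mul_zero])
  -- the projected polynomial is in the vanishing ideal of 𝕏
  have hπ : projA (Fin m) (Fin n) g ∈ vIdeal (↑𝕏 : Set ((Fin m ⊕ Fin n) → ℂ)) := by
    rw [mem_vIdeal]
    intro v hv c
    rw [eval_projA]
    have hfun : (Sum.elim (fun a => (c • v) (Sum.inl a)) fun _ => (0 : ℂ))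
        = c • Sum.elim (fun i : Fin m => v (Sum.inl i)) fun _ : Fin n => (0 : ℂ) := by
      funext i
      rcases i with a | b <;> simp
    rw [hfun]
    exact mem_vIdeal.mp hg _ (by
      rw [Finset.coe_image]
      exact Set.mem_image_of_mem _ hv) c
  have hzero : apolar (projA (Fin m) (Fin n) g)
      (rename Sum.inl F₁ * rename Sum.inr F₂) = 0 := hap _ hπ
  have key : apolar (projA (Fin m) (Fin n) g) (rename Sum.inl F₁ * rename Sum.inr F₂)
      = apolar (projA (Fin m) (Fin n) g)
          (rename Sum.inl F₁ : MvPolynomial (Fin m ⊕ Fin n) ℂ) * rename Sum.inr F₂ := by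
    unfold apolar
    rw [Finset.sum_mul]
    refine Finset.sum_congr rfl fun k hk => ?_
    have hP : ∀ b, k (Sum.inr b) = 0 := by
      by_contra h
      have hc := coeff_projA g k
      rw [if_neg h] at hc
      exact MvPolynomial.mem_support_iff.mp hk hc
    rw [contract_mul F₁ F₂ k hP, smul_mul_assoc]
  rw [key] at hzero
  rcases mul_eq_zero.mp hzero with h | h
  · rw [← apolar_projA g F₁, h]
  · exact absurd h hB
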